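/- Let α(s), a(s), β(s) be continuous, strictly increasing, nonnegative functions on [0,∞) with α(s) → α, a(s) → a, β(s) → β as s → 0⁺, where α, a, β ≥ 0, α + β > 0, and α + a + β = 1. Define c₊*(s) = inf_{μ>0} (a(s)−1+α(s) e^μ+β(s) e^{−μ})/μ for s > 0. Then lim_{s→0⁺} c₊*(s) = α − β. -/

import Mathlib

open Set Filter Real

theorem stmt_17 (αf af βf : ℝ → ℝ) (α a β : ℝ)
    (hcα : ContinuousOn αf (Ici 0)) (hca : ContinuousOn af (Ici 0))
    (hcβ : ContinuousOn βf (Ici 0))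
    (hmα : StrictMonoOn αf (Ici 0)) (hma : StrictMonoOn af (Ici 0))
    (hmβ : StrictMonoOn βf (Ici 0))
    (hnα : ∀ s ∈ Ici (0:ℝ), 0 ≤ αf s) (hna : ∀ s ∈ Ici (0:ℝ), 0 ≤ af s)
    (hnβ : ∀ s ∈ Ici (0:ℝ), 0 ≤ βf s)
    (hlα : Tendsto αf (nhdsWithin 0 (Ioi 0)) (nhds α))
    (hla : Tendsto af (nhdsWithin 0 (Ioi 0)) (nhds a))
    (hlβ : Tendsto βf (nhdsWithin 0 (Ioi 0)) (nhds β))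
    (hα : 0 ≤ α) (ha : 0 ≤ a) (hβ : 0 ≤ β)
    (hαβ : 0 < α + β) (hsum : α + a + β = 1) :
    Tendsto
      (fun s => sInf ((fun μ => (af s - 1 + αf s * exp μ + βf s * exp (-μ)) / μ) '' Ioi 0))
      (nhdsWithin 0 (Ioi 0)) (nhds (α - β)) := by
  -- values at 0 equal the limits
  have h0 : ∀ (f : ℝ → ℝ) (l : ℝ), ContinuousOn f (Ici 0) →
      Tendsto f (nhdsWithin 0 (Ioi 0)) (nhds l) → f 0 = l := by
    intro f l hc hl
    have h1 : Tendsto f (nhdsWithin 0 (Ici 0)) (nhds (f 0)) := hc 0 self_mem_Ici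
    have h2 : Tendsto f (nhdsWithin 0 (Ioi 0)) (nhds (f 0)) :=
      h1.mono_left (nhdsWithin_mono _ Ioi_subset_Ici_self)
    exact tendsto_nhds_unique h2 hl
  have hα0 : αf 0 = α := h0 αf α hcα hlα
  have ha0 : af 0 = a := h0 af a hca hla
  have hβ0 : βf 0 = β := h0 βf β hcβ hlβ
  -- lower bound for each element of the image set
  have lb : ∀ s ∈ Ioi (0:ℝ), ∀ μ ∈ Ioi (0:ℝ),
      α - β ≤ (af s - 1 + αf s * exp μ + βf s * exp (-μ)) / μ := by
    intro s hs μ hμ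
    have hμ' : (0:ℝ) < μ := hμ
    have hαs : α ≤ αf s := by
      rw [← hα0]; exact (hmα self_mem_Ici (mem_Ici.mpr (le_of_lt hs)) hs).le
    have has : a ≤ af s := by
      rw [← ha0]; exact (hma self_mem_Ici (mem_Ici.mpr (le_of_lt hs)) hs).le
    have hβs : β ≤ βf s := by
      rw [← hβ0]; exact (hmβ self_mem_Ici (mem_Ici.mpr (le_of_lt hs)) hs).le
    rw [le_div_iff₀ hμ']
    have e1 : μ + 1 ≤ exp μ := Real.add_one_le_exp μ
    have e2 : -μ + 1 ≤ exp (-μ) := Real.add_one_le_exp (-μ)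
    have he1 : (0:ℝ) < exp μ := exp_pos μ
    have he2 : (0:ℝ) < exp (-μ) := exp_pos (-μ)
    nlinarith [mul_le_mul_of_nonneg_right hαs he1.le,
      mul_le_mul_of_nonneg_right hβs he2.le,
      mul_le_mul_of_nonneg_left e1 hα, mul_le_mul_of_nonneg_left e2 hβ]
  have hbdd : ∀ s ∈ Ioi (0:ℝ), BddBelow
      ((fun μ => (af s - 1 + αf s * exp μ + βf s * exp (-μ)) / μ) '' Ioi 0) := by
    intro s hs
    refine ⟨α - β, ?_⟩
    rintro x ⟨μ, hμ, rfl⟩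
    exact lb s hs μ hμ
  have hne : ∀ s : ℝ,
      ((fun μ => (af s - 1 + αf s * exp μ + βf s * exp (-μ)) / μ) '' Ioi 0).Nonempty :=
    fun s => nonempty_Ioi.image _
  rw [tendsto_order]
  constructor
  · intro c hc
    filter_upwards [self_mem_nhdsWithin] with s hs
    have : α - β ≤ sInf ((fun μ => (af s - 1 + αf s * exp μ + βf s * exp (-μ)) / μ) '' Ioi 0) := by
      apply le_csInf (hne s)
      rintro x ⟨μ, hμ, rfl⟩
      exact lb s hs μ hμ
    linarith
  · intro c hc
    -- find μ > 0 with the limiting quotient below c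
    have e1 : HasDerivAt (fun μ : ℝ => Real.exp μ) 1 0 := by
      simpa using Real.hasDerivAt_exp 0
    have e2 : HasDerivAt (fun μ : ℝ => Real.exp (-μ)) (-1) 0 := by
      simpa using (hasDerivAt_neg (0:ℝ)).exp
    have hd : HasDerivAt (fun μ : ℝ => a - 1 + α * Real.exp μ + β * Real.exp (-μ))
        (α - β) 0 := by
      have := ((e1.const_mul α).const_add (a - 1)).add (e2.const_mul β)
      exact this.congr_deriv (by ring)
    have hslope := hasDerivAt_iff_tendsto_slope.mp hd
    have hslope' : Tendsto (slope (fun μ : ℝ => a - 1 + α * Real.exp μ + β * Real.exp (-μ)) 0)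
        (nhdsWithin 0 (Ioi 0)) (nhds (α - β)) :=
      hslope.mono_left (nhdsWithin_mono _ (fun x hx => ne_of_gt hx))
    have hev : ∀ᶠ μ in nhdsWithin (0:ℝ) (Ioi 0),
        slope (fun μ : ℝ => a - 1 + α * Real.exp μ + β * Real.exp (-μ)) 0 μ < c :=
      (tendsto_order.1 hslope').2 c hc
    obtain ⟨μ, hμc, hμpos⟩ := (hev.and self_mem_nhdsWithin).exists
    have hμ0 : (0:ℝ) < μ := hμpos
    have h00 : a - 1 + α + β = 0 := by linarith
    have hμc' : (a - 1 + α * Real.exp μ + β * Real.exp (-μ)) / μ < c := by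
      have heq : slope (fun μ : ℝ => a - 1 + α * Real.exp μ + β * Real.exp (-μ)) 0 μ
          = (a - 1 + α * Real.exp μ + β * Real.exp (-μ)) / μ := by
        rw [slope_def_field]
        simp only [Real.exp_zero, neg_zero, mul_one, sub_zero]
        rw [h00, sub_zero]
      rwa [heq] at hμc
    -- the quotient at μ converges as s → 0⁺
    have htend : Tendsto (fun s => (af s - 1 + αf s * exp μ + βf s * exp (-μ)) / μ)
        (nhdsWithin 0 (Ioi 0)) (nhds ((a - 1 + α * exp μ + β * exp (-μ)) / μ)) :=
      (((hla.sub_const 1).add (hlα.mul_const _)).add (hlβ.mul_const _)).div_const μ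
    have hev2 : ∀ᶠ s in nhdsWithin (0:ℝ) (Ioi 0),
        (af s - 1 + αf s * exp μ + βf s * exp (-μ)) / μ < c :=
      (tendsto_order.1 htend).2 c hμc'
    filter_upwards [hev2, self_mem_nhdsWithin] with s hs1 hs2
    have hle : sInf ((fun μ => (af s - 1 + αf s * exp μ + βf s * exp (-μ)) / μ) '' Ioi 0)
        ≤ (af s - 1 + αf s * exp μ + βf s * exp (-μ)) / μ :=
      csInf_le (hbdd s hs2) ⟨μ, hμ0, rfl⟩
    linarith
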